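/- Let (A,·) be a group. There is a bijective correspondence between group operations ∘ making (A,·,∘) a skew brace and regular subgroups G of the holomorph Hol(A,·) = A ⋊ Aut(A,·): to ∘ one associates G = {(a, λ_a) | a ∈ A}, and conversely a regular subgroup G gives a∘b := a·μ_a(b) where (a, μ_a) is the unique element of G projecting to a. -/

import Mathlib

/-- A skew brace structure on a group `(A,·)`: a second group operation `∘`
(with identity `e` and inverse `cinv`) satisfying
`a ∘ (b · c) = (a ∘ b) · a⁻¹ · (a ∘ c)`. -/
structure SkewBrace (A : Type*) [Group A] where
  circ : A → A → A
  e : A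
  cinv : A → A
  circ_assoc : ∀ a b c, circ (circ a b) c = circ a (circ b c)
  e_circ : ∀ a, circ e a = a
  circ_e : ∀ a, circ a e = a
  cinv_circ : ∀ a, circ (cinv a) a = e
  circ_cinv : ∀ a, circ a (cinv a) = e
  compat : ∀ a b c, circ a (b * c) = circ a b * a⁻¹ * circ a c

/-- The λ-map of a skew brace: `λ_a(b) = a⁻¹ · (a ∘ b)`. -/
def SkewBrace.lam {A : Type*} [Group A] (B : SkewBrace A) (a b : A) : A :=
  a⁻¹ * B.circ a b

/-- The holomorph `Hol(A) = A ⋊ Aut(A)`. -/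
abbrev Hol (A : Type*) [Group A] :=
  A ⋊[MonoidHom.id (MulAut A)] (MulAut A)

namespace SkewBrace

variable {A : Type*} [Group A] (B : SkewBrace A)

lemma ext' {B C : SkewBrace A} (h1 : B.circ = C.circ) (h2 : B.e = C.e)
    (h3 : B.cinv = C.cinv) : B = C := by
  cases B; cases C; dsimp at h1 h2 h3; subst h1; subst h2; subst h3; rfl

lemma e_eq_one : B.e = 1 := by
  have h := B.compat B.e 1 1
  rw [one_mul, B.e_circ] at h
  have h2 : B.e⁻¹ = 1 := by simpa using h.symm
  simpa using congrArg (·⁻¹) h2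

lemma circ_one (a : A) : B.circ a 1 = a := by
  have h := B.compat a 1 1
  rw [one_mul] at h
  have h2 : B.circ a 1 * 1 = B.circ a 1 * (a⁻¹ * B.circ a 1) := by
    rw [mul_one, ← mul_assoc]; exact h
  have h3 := mul_left_cancel h2
  have h4 := congrArg (a * ·) h3
  simpa using h4.symm

lemma circ_inv (a b : A) : B.circ a b⁻¹ = a * (B.circ a b)⁻¹ * a := by
  have h := B.compat a b b⁻¹
  rw [mul_inv_cancel, B.circ_one] at h
  -- a = circ a b * a⁻¹ * circ a b⁻¹
  have := congrArg (fun x => a * (B.circ a b)⁻¹ * x) h.symm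
  calc B.circ a b⁻¹ = a * (B.circ a b)⁻¹ * (B.circ a b * a⁻¹ * B.circ a b⁻¹) := by
        group
    _ = a * (B.circ a b)⁻¹ * a := by rw [← h]

lemma lam_mul (a b c : A) : B.lam a (b * c) = B.lam a b * B.lam a c := by
  simp only [lam, B.compat a b c]; group

lemma lam_inv (a b : A) : B.lam a b⁻¹ = (B.lam a b)⁻¹ := by
  simp only [lam, B.circ_inv a b]; group

lemma lam_lam (a b c : A) : B.lam a (B.lam b c) = B.lam (B.circ a b) c := by
  simp only [lam]
  rw [B.compat a b⁻¹ (B.circ b c), B.circ_inv a b, ← B.circ_assoc]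
  group

lemma lam_e (c : A) : B.lam B.e c = c := by
  show B.e⁻¹ * B.circ B.e c = c
  rw [B.e_circ, B.e_eq_one]; simp

lemma lam_cinv_lam (a c : A) : B.lam (B.cinv a) (B.lam a c) = c := by
  rw [B.lam_lam, B.cinv_circ, B.lam_e]

lemma lam_lam_cinv (a c : A) : B.lam a (B.lam (B.cinv a) c) = c := by
  rw [B.lam_lam, B.circ_cinv, B.lam_e]

/-- The λ-map as an automorphism. -/
def lamAut (a : A) : MulAut A where
  toFun := B.lam a
  invFun := B.lam (B.cinv a)
  left_inv := B.lam_cinv_lam a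
  right_inv := B.lam_lam_cinv a
  map_mul' := B.lam_mul a

@[simp] lemma lamAut_apply (a b : A) : B.lamAut a b = B.lam a b := rfl

@[simp] lemma lamAut_symm_apply (a b : A) : (B.lamAut a).symm b = B.lam (B.cinv a) b := rfl

lemma lam_cinv_inv (a : A) : B.lam (B.cinv a) a⁻¹ = B.cinv a := by
  rw [lam, B.circ_inv, B.cinv_circ, B.e_eq_one]; group

/-- The regular subgroup associated to a skew brace. -/
def toSub : Subgroup (Hol A) where
  carrier := {x | ∀ b, x.right b = B.lam x.left b}
  one_mem' := by
    intro b
    show b = B.lam 1 b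
    rw [← B.e_eq_one, B.lam_e]
  mul_mem' := by
    intro x y hx hy b
    have hxA : x.right = B.lamAut x.left := MulEquiv.ext hx
    have hyA : y.right = B.lamAut y.left := MulEquiv.ext hy
    simp only [SemidirectProduct.mul_left, SemidirectProduct.mul_right, MonoidHom.id_apply,
      MulAut.mul_apply, hxA, hyA, lamAut_apply]
    rw [B.lam_lam]
    congr 1
    simp [lam, mul_assoc]
  inv_mem' := by
    intro x hx b
    have hxA : x.right = B.lamAut x.left := MulEquiv.ext hx
    simp only [SemidirectProduct.inv_left, SemidirectProduct.inv_right, MonoidHom.id_apply, hxA]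
    have h1 : ∀ c, (B.lamAut x.left)⁻¹ c = B.lam (B.cinv x.left) c := fun c => rfl
    rw [h1, h1, B.lam_cinv_inv]

lemma mem_toSub {x : Hol A} : x ∈ B.toSub ↔ ∀ b, x.right b = B.lam x.left b := Iff.rfl

lemma toSub_regular : Function.Bijective fun h : B.toSub => (h : Hol A).left := by
  constructor
  · rintro ⟨x, hx⟩ ⟨y, hy⟩ h
    dsimp at h
    ext : 1
    exact SemidirectProduct.ext h
      (MulEquiv.ext fun b => by rw [hx b, hy b, h])
  · intro a
    refine ⟨⟨⟨a, B.lamAut a⟩, fun b => rfl⟩, rfl⟩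

end SkewBrace

section ofSub

variable {A : Type*} [Group A] (H : Subgroup (Hol A))
  (hH : Function.Bijective fun h : H => (h : Hol A).left)

/-- The bijection `H ≃ A` given by regularity. -/
noncomputable def regEquiv : H ≃ A := Equiv.ofBijective _ hH

@[simp] lemma regEquiv_symm_left (a : A) :
    (((regEquiv H hH).symm a : H) : Hol A).left = a :=
  (regEquiv H hH).apply_symm_apply a

lemma regEquiv_symm_eq (h : H) : (regEquiv H hH).symm ((h : Hol A).left) = h :=
  (regEquiv H hH).symm_apply_apply h

/-- The skew brace associated to a regular subgroup. -/
noncomputable def ofSub : SkewBrace A where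
  circ a b := ((((regEquiv H hH).symm a * (regEquiv H hH).symm b : H)) : Hol A).left
  e := 1
  cinv a := ((((regEquiv H hH).symm a)⁻¹ : H) : Hol A).left
  circ_assoc a b c := by
    rw [regEquiv_symm_eq, regEquiv_symm_eq, mul_assoc]
  e_circ a := by
    have h1 : (regEquiv H hH).symm 1 = 1 := by
      have : ((1 : H) : Hol A).left = 1 := rfl
      rw [← this, regEquiv_symm_eq]
    rw [h1, one_mul, regEquiv_symm_left]
  circ_e a := by
    have h1 : (regEquiv H hH).symm 1 = 1 := by
      have : ((1 : H) : Hol A).left = 1 := rfl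
      rw [← this, regEquiv_symm_eq]
    rw [h1, mul_one, regEquiv_symm_left]
  cinv_circ a := by
    rw [regEquiv_symm_eq, inv_mul_cancel]; rfl
  circ_cinv a := by
    rw [regEquiv_symm_eq, mul_inv_cancel]; rfl
  compat a b c := by
    have key : ∀ x : A, ((((regEquiv H hH).symm a * (regEquiv H hH).symm x : H)) : Hol A).left
        = a * (((regEquiv H hH).symm a : H) : Hol A).right x := by
      intro x
      show ((((regEquiv H hH).symm a : H) : Hol A) * (((regEquiv H hH).symm x : H) : Hol A)).left = _
      rw [SemidirectProduct.mul_left, regEquiv_symm_left, regEquiv_symm_left]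
      rfl
    rw [key, key, key, map_mul]
    group

lemma ofSub_circ (a b : A) : (ofSub H hH).circ a b
    = a * (((regEquiv H hH).symm a : H) : Hol A).right b := by
  show ((((regEquiv H hH).symm a : H) : Hol A) * (((regEquiv H hH).symm b : H) : Hol A)).left = _
  rw [SemidirectProduct.mul_left, regEquiv_symm_left, regEquiv_symm_left]
  rfl

lemma ofSub_lam (a b : A) : (ofSub H hH).lam a b
    = (((regEquiv H hH).symm a : H) : Hol A).right b := by
  rw [SkewBrace.lam, ofSub_circ]; group

end ofSub

/-- For a group `(A,·)`, there is a bijective correspondence between skew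
brace structures `∘` on `(A,·)` and regular subgroups of `Hol(A,·)`: the skew
brace `∘` corresponds to `{(a, λ_a) | a ∈ A}`, i.e. to the subgroup whose
elements `(a, μ)` satisfy `μ(b) = a⁻¹·(a ∘ b)` (equivalently
`a ∘ b = a·μ(b)`). -/
theorem stmt18 {A : Type*} [Group A] :
    ∃ eq : SkewBrace A ≃
      {H : Subgroup (Hol A) //
        Function.Bijective fun h : H => (h : Hol A).left},
      ∀ B : SkewBrace A, ∀ x : Hol A,
        x ∈ (eq B : Subgroup (Hol A)) ↔
          ∀ b : A, x.right b = x.left⁻¹ * B.circ x.left b := by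
  refine ⟨⟨fun B => ⟨B.toSub, B.toSub_regular⟩,
      fun H => ofSub H.1 H.2, ?_, ?_⟩, fun B x => Iff.rfl⟩
  · -- left inverse
    intro B
    set H := B.toSub with hHdef
    set hH := B.toSub_regular with hhH
    apply SkewBrace.ext'
    · funext a b
      rw [ofSub_circ]
      have hmem := ((regEquiv H hH).symm a : H).2
      rw [SkewBrace.mem_toSub] at hmem
      rw [hmem b, regEquiv_symm_left, SkewBrace.lam]
      group
    · exact B.e_eq_one.symm
    · funext a
      show ((((regEquiv H hH).symm a)⁻¹ : H) : Hol A).left = B.cinv a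
      have hmem := ((regEquiv H hH).symm a : H).2
      rw [SkewBrace.mem_toSub] at hmem
      have hx : (((regEquiv H hH).symm a : H) : Hol A) = ⟨a, B.lamAut a⟩ := by
        refine SemidirectProduct.ext (regEquiv_symm_left H hH a) ?_
        refine MulEquiv.ext fun b => ?_
        rw [hmem b, regEquiv_symm_left]
        rfl
      rw [show ((((regEquiv H hH).symm a)⁻¹ : H) : Hol A) = (((regEquiv H hH).symm a : H) : Hol A)⁻¹ from rfl, hx]
      show (MonoidHom.id (MulAut A)) (B.lamAut a)⁻¹ a⁻¹ = B.cinv a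
      have : ∀ c, (B.lamAut a)⁻¹ c = B.lam (B.cinv a) c := fun c => rfl
      rw [MonoidHom.id_apply, this, B.lam_cinv_inv]
  · -- right inverse
    rintro ⟨H, hH⟩
    refine Subtype.ext ?_
    dsimp only
    ext x
    rw [SkewBrace.mem_toSub]
    constructor
    · intro hx
      have hx' : ∀ b, x.right b = (((regEquiv H hH).symm x.left : H) : Hol A).right b := by
        intro b; rw [hx b, ofSub_lam]
      have : x = (((regEquiv H hH).symm x.left : H) : Hol A) :=
        SemidirectProduct.ext (regEquiv_symm_left H hH x.left).symm (MulEquiv.ext hx')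
      rw [this]
      exact ((regEquiv H hH).symm x.left : H).2
    · intro hx b
      rw [ofSub_lam]
      have : (regEquiv H hH).symm x.left = ⟨x, hx⟩ := regEquiv_symm_eq H hH ⟨x, hx⟩
      rw [this]
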